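/- Let s be a feasible point of an LP-relaxation polytope P ⊆ [0,1]^d. Suppose for every constraint π of P and every multiplier product z over at most k variables there is a probability distribution E_{π,z} over 0-1 points of P ∩ {0,1}^d whose marginals agree with s on the variables of the lifted constraint, and such that for any two lifted constraints, the probability of every common monomial event x_{i_1}=...=x_{i_l}=1 (l ≤ k+1) agrees between the two distributions. Then s belongs to the level-k Sherali-Adams relaxation SA^k(P). -/

import Mathlib

open Finset
open scoped Classical

/-- Moment of a finitely supported distribution: probability (expectation) of the
monomial event `∀ i ∈ I, x_i = 1` for 0-1 valued points `v ω`. -/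
noncomputable def moment {Ω d : Type*} [Fintype Ω] [Fintype d]
    (p : Ω → ℝ) (v : Ω → d → ℝ) (I : Finset d) : ℝ :=
  ∑ ω, p ω * ∏ i ∈ I, v ω i

/-- Value of the linearization of the lifted constraint
`(β - ∑ i, a i * x i) * ∏_{i ∈ U \ W} x_i * ∏_{i ∈ W} (1 - x_i) ≥ 0`
under the lifting `∏_{i ∈ I} x_i ↦ X I` (with `x_i^2 ↦ x_i`). -/
noncomputable def liftVal {d : Type*} [Fintype d] [DecidableEq d]
    (a : d → ℝ) (β : ℝ) (X : Finset d → ℝ) (U W : Finset d) : ℝ :=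
  ∑ T ∈ W.powerset, (-1 : ℝ) ^ T.card *
    (β * X ((U \ W) ∪ T) - ∑ i, a i * X (insert i ((U \ W) ∪ T)))

/-- Membership of `s` in the level-`k` Sherali-Adams relaxation of the polytope
`{x | ∀ r, ∑ i, A r i * x i ≤ b r}`: there is a lifting `X` extending `s` that
satisfies all lifted constraints with multipliers on at most `k` variables. -/
noncomputable def memSA {d R : Type*} [Fintype d] [DecidableEq d]
    (A : R → d → ℝ) (b : R → ℝ) (k : ℕ) (s : d → ℝ) : Prop :=
  ∃ X : Finset d → ℝ, X ∅ = 1 ∧ (∀ i, X {i} = s i) ∧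
    ∀ r, ∀ U W : Finset d, W ⊆ U → U.card ≤ k → 0 ≤ liftVal (A r) (b r) X U W

lemma prod_insert01 {d : Type*} [DecidableEq d] (x : d → ℝ)
    (hx : ∀ i, x i = 0 ∨ x i = 1) (J : Finset d) (i : d) :
    ∏ j ∈ insert i J, x j = x i * ∏ j ∈ J, x j := by
  by_cases h : i ∈ J
  · rw [Finset.insert_eq_self.2 h]
    rcases hx i with h0 | h1
    · rw [h0, zero_mul, Finset.prod_eq_zero h h0]
    · rw [h1, one_mul]
  · exact Finset.prod_insert h

lemma sum_neg_prod {d : Type*} [DecidableEq d] (x : d → ℝ) (W : Finset d) :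
    ∑ T ∈ W.powerset, (-1 : ℝ) ^ T.card * ∏ j ∈ T, x j = ∏ j ∈ W, (1 - x j) := by
  have h := Finset.prod_add (fun j => -x j) (fun _ => (1:ℝ)) W
  simp only [Finset.prod_const_one, mul_one] at h
  calc ∑ T ∈ W.powerset, (-1 : ℝ) ^ T.card * ∏ j ∈ T, x j
      = ∑ T ∈ W.powerset, ∏ j ∈ T, (-x j) := by
        refine Finset.sum_congr rfl fun T _ => ?_
        have : ∏ j ∈ T, (-x j) = ∏ j ∈ T, ((-1 : ℝ) * x j) := by
          exact Finset.prod_congr rfl fun j _ => by ring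
        rw [this, Finset.prod_mul_distrib, Finset.prod_const]
    _ = ∏ j ∈ W, (1 - x j) := by
        rw [← h]
        exact Finset.prod_congr rfl fun j _ => by ring

theorem sa_survival {d R : Type*} [Fintype d] [DecidableEq d] [Fintype R]
    (A : R → d → ℝ) (b : R → ℝ) (k : ℕ) (s : d → ℝ)
    (hs : ∀ r, ∑ i, A r i * s i ≤ b r) (hs01 : ∀ i, 0 ≤ s i ∧ s i ≤ 1)
    (Ω : R → Finset d → Finset d → Type)
    [∀ r U W, Fintype (Ω r U W)]
    (p : ∀ r U W, Ω r U W → ℝ) (v : ∀ r U W, Ω r U W → d → ℝ)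
    (hp0 : ∀ r U W ω, 0 ≤ p r U W ω) (hp1 : ∀ r U W, ∑ ω, p r U W ω = 1)
    (hint : ∀ r U W ω i, v r U W ω i = 0 ∨ v r U W ω i = 1)
    (hfeas : ∀ r U W ω r', ∑ i, A r' i * v r U W ω i ≤ b r')
    (hmarg : ∀ r (U W : Finset d), W ⊆ U → U.card ≤ k →
      ∀ i ∈ U ∪ Finset.univ.filter (fun i => A r i ≠ 0),
        moment (p r U W) (v r U W) {i} = s i)
    (hcons : ∀ r₁ (U₁ W₁ : Finset d), ∀ r₂ (U₂ W₂ : Finset d),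
      W₁ ⊆ U₁ → U₁.card ≤ k → W₂ ⊆ U₂ → U₂.card ≤ k →
      ∀ I : Finset d, I.card ≤ k + 1 →
        I ⊆ U₁ ∪ Finset.univ.filter (fun i => A r₁ i ≠ 0) →
        I ⊆ U₂ ∪ Finset.univ.filter (fun i => A r₂ i ≠ 0) →
        moment (p r₁ U₁ W₁) (v r₁ U₁ W₁) I = moment (p r₂ U₂ W₂) (v r₂ U₂ W₂) I) :
    memSA A b k s := by
  set supp : R → Finset d := fun r => Finset.univ.filter (fun i => A r i ≠ 0) with hsupp
  set Cov : Finset d → Prop := fun I =>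
    ∃ r : R, ∃ U : Finset d, ∃ W : Finset d, W ⊆ U ∧ U.card ≤ k ∧ I.card ≤ k + 1 ∧ I ⊆ U ∪ supp r with hCov
  set X : Finset d → ℝ := fun I =>
    if h : Cov I then
      moment (p h.choose h.choose_spec.choose h.choose_spec.choose_spec.choose)
             (v h.choose h.choose_spec.choose h.choose_spec.choose_spec.choose) I
    else ∏ i ∈ I, s i with hXdef
  -- well-definedness
  have hXeq : ∀ (I : Finset d) (r : R) (U W : Finset d), W ⊆ U → U.card ≤ k →
      I.card ≤ k + 1 → I ⊆ U ∪ supp r → X I = moment (p r U W) (v r U W) I := by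
    intro I r U W hWU hUk hIk hIs
    have h : Cov I := ⟨r, U, W, hWU, hUk, hIk, hIs⟩
    have hspec := h.choose_spec.choose_spec.choose_spec
    simp only [hXdef, dif_pos h]
    exact hcons _ _ _ r U W hspec.1 hspec.2.1 hWU hUk I hIk hspec.2.2.2 hIs
  refine ⟨X, ?_, ?_, ?_⟩
  · -- X ∅ = 1
    simp only [hXdef]
    split_ifs with h
    · simp [moment, hp1]
      exact hp1 _ _ _
    · simp
  · -- X {i} = s i
    intro i
    by_cases h : Cov {i}
    · obtain ⟨r, U, W, hWU, hUk, hIk, hIs⟩ := h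
      rw [hXeq {i} r U W hWU hUk hIk hIs]
      exact hmarg r U W hWU hUk i (hIs (Finset.mem_singleton_self i))
    · simp only [hXdef, dif_neg h, Finset.prod_singleton]
  · -- lifted constraints
    intro r U W hWU hUk
    set q := p r U W with hq
    set w := v r U W with hw
    have hcard : ∀ T ∈ W.powerset, ((U \ W) ∪ T).card ≤ k + 1 ∧ (U \ W) ∪ T ⊆ U := by
      intro T hT
      rw [Finset.mem_powerset] at hT
      have hsub : (U \ W) ∪ T ⊆ U :=
        Finset.union_subset (Finset.sdiff_subset) (hT.trans hWU)
      exact ⟨le_trans (le_trans (Finset.card_le_card hsub) hUk) (Nat.le_succ k), hsub⟩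
    -- replace X by the moments of the fixed distribution
    have hXmom : liftVal (A r) (b r) X U W
        = liftVal (A r) (b r) (fun I => moment q w I) U W := by
      unfold liftVal
      refine Finset.sum_congr rfl fun T hT => ?_
      obtain ⟨hc, hsub⟩ := hcard T hT
      have h1 : X ((U \ W) ∪ T) = moment q w ((U \ W) ∪ T) :=
        hXeq _ r U W hWU hUk hc (hsub.trans Finset.subset_union_left)
      have h2 : ∀ i, A r i * X (insert i ((U \ W) ∪ T))
          = A r i * moment q w (insert i ((U \ W) ∪ T)) := by
        intro i
        by_cases hA : A r i = 0
        · simp [hA]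
        · have hins : insert i ((U \ W) ∪ T) ⊆ U ∪ supp r := by
            refine Finset.insert_subset ?_ (hsub.trans Finset.subset_union_left)
            exact Finset.mem_union_right _ (Finset.mem_filter.2 ⟨Finset.mem_univ i, hA⟩)
          have hcins : (insert i ((U \ W) ∪ T)).card ≤ k + 1 := by
            refine le_trans (Finset.card_insert_le _ _) ?_
            have := le_trans (Finset.card_le_card hsub) hUk
            omega
          rw [hXeq _ r U W hWU hUk hcins hins]
      rw [h1]
      congr 1
      congr 1
      exact Finset.sum_congr rfl fun i _ => h2 i
    rw [hXmom]
    -- now compute the lifted value pointwise over ω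
    have hint' : ∀ (ω : Ω r U W) i, w ω i = 0 ∨ w ω i = 1 := hint r U W
    have hpoint : liftVal (A r) (b r) (fun I => moment q w I) U W
        = ∑ ω, q ω * ((b r - ∑ i, A r i * w ω i) *
            ((∏ j ∈ U \ W, w ω j) * ∏ j ∈ W, (1 - w ω j))) := by
      have hins : ∀ (ω : Ω r U W) i (J : Finset d),
          ∏ j ∈ insert i J, w ω j = w ω i * ∏ j ∈ J, w ω j :=
        fun ω i J => prod_insert01 (w ω) (hint' ω) J i
      have hdisj : ∀ T ∈ W.powerset, Disjoint (U \ W) T := by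
        intro T hT
        rw [Finset.mem_powerset] at hT
        exact Finset.disjoint_of_subset_right hT Finset.sdiff_disjoint
      unfold liftVal moment
      calc ∑ T ∈ W.powerset, (-1 : ℝ) ^ T.card *
            (b r * ((fun I => ∑ ω, q ω * ∏ j ∈ I, w ω j) ((U \ W) ∪ T))
              - ∑ i, A r i * ((fun I => ∑ ω, q ω * ∏ j ∈ I, w ω j) (insert i ((U \ W) ∪ T))))
          = ∑ T ∈ W.powerset, ∑ ω,
              (q ω * ((b r - ∑ i, A r i * w ω i) * ∏ j ∈ U \ W, w ω j))
                * ((-1 : ℝ) ^ T.card * ∏ j ∈ T, w ω j) := by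
            refine Finset.sum_congr rfl fun T hT => ?_
            simp only
            have e1 : ∑ i, A r i * ∑ ω, q ω * ∏ j ∈ insert i ((U \ W) ∪ T), w ω j
                = ∑ ω, ∑ i, A r i * (q ω * ∏ j ∈ insert i ((U \ W) ∪ T), w ω j) := by
              rw [Finset.sum_comm]
              exact Finset.sum_congr rfl fun i _ => Finset.mul_sum _ _ _
            rw [e1, Finset.mul_sum, ← Finset.sum_sub_distrib, Finset.mul_sum]
            refine Finset.sum_congr rfl fun ω _ => ?_
            have hprod : ∏ j ∈ (U \ W) ∪ T, w ω j
                = (∏ j ∈ U \ W, w ω j) * ∏ j ∈ T, w ω j :=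
              Finset.prod_union (hdisj T hT)
            have e2 : ∑ i, A r i * (q ω * ∏ j ∈ insert i ((U \ W) ∪ T), w ω j)
                = (∑ i, A r i * w ω i) * (q ω * ∏ j ∈ (U \ W) ∪ T, w ω j) := by
              rw [Finset.sum_mul]
              refine Finset.sum_congr rfl fun i _ => ?_
              rw [hins ω i ((U \ W) ∪ T)]
              ring
            rw [e2, hprod]
            ring
        _ = ∑ ω, ∑ T ∈ W.powerset,
              (q ω * ((b r - ∑ i, A r i * w ω i) * ∏ j ∈ U \ W, w ω j))
                * ((-1 : ℝ) ^ T.card * ∏ j ∈ T, w ω j) := Finset.sum_comm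
        _ = ∑ ω, q ω * ((b r - ∑ i, A r i * w ω i) *
              ((∏ j ∈ U \ W, w ω j) * ∏ j ∈ W, (1 - w ω j))) := by
            refine Finset.sum_congr rfl fun ω _ => ?_
            rw [← Finset.mul_sum, sum_neg_prod]
            ring
    rw [hpoint]
    refine Finset.sum_nonneg fun ω _ => ?_
    have h1 : 0 ≤ b r - ∑ i, A r i * w ω i := sub_nonneg.2 (hfeas r U W ω r)
    have h2 : 0 ≤ ∏ j ∈ U \ W, w ω j :=
      Finset.prod_nonneg fun j _ => by rcases hint' ω j with h | h <;> rw [h] <;> norm_num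
    have h3 : 0 ≤ ∏ j ∈ W, (1 - w ω j) :=
      Finset.prod_nonneg fun j _ => by rcases hint' ω j with h | h <;> rw [h] <;> norm_num
    exact mul_nonneg (hp0 r U W ω) (mul_nonneg h1 (mul_nonneg h2 h3))
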